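/- Let n ≥ 3 and let A be a primitive (0,1) companion matrix of order n with zero trace. Let ℓ_1 < ℓ_2 < ... < ℓ_z be the distinct lengths of elementary cycles in D(A). Then exp(A:1,1) = n + F(ℓ_1,...,ℓ_z), where F(ℓ_1,...,ℓ_z) is the Frobenius number: the smallest integer x such that every integer ≥ x is a nonnegative integer combination of ℓ_1,...,ℓ_z. -/

import Mathlib

open Matrix BigOperators

/-- A nonnegative square matrix is primitive if some positive power has all entries positive. -/
def IsPrimitive {n : ℕ} (A : Matrix (Fin n) (Fin n) ℝ) : Prop :=
  ∃ m : ℕ, 0 < m ∧ ∀ i j, 0 < (A ^ m) i j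

/-- The exponent of a primitive matrix: the least positive `m` with `A ^ m > 0`. -/
noncomputable def matExp {n : ℕ} (A : Matrix (Fin n) (Fin n) ℝ) : ℕ :=
  sInf {m : ℕ | 0 < m ∧ ∀ i j, 0 < (A ^ m) i j}

/-- `(0,1)` companion matrix: superdiagonal ones on the first `n-1` rows,
arbitrary `(0,1)` last row, all other entries zero. -/
def IsCompanion {n : ℕ} (A : Matrix (Fin n) (Fin n) ℝ) : Prop :=
  (∀ i j, A i j = 0 ∨ A i j = 1) ∧
  (∀ i j : Fin n, (i : ℕ) + 1 < n → (A i j = 1 ↔ (j : ℕ) = (i : ℕ) + 1))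

/-- `exp(A:i,j)`: least positive `k` such that `(A^l) i j > 0` for all `l ≥ k`. -/
noncomputable def expIJ {n : ℕ} (A : Matrix (Fin n) (Fin n) ℝ) (i j : Fin n) : ℕ :=
  sInf {k : ℕ | 0 < k ∧ ∀ l, k ≤ l → 0 < (A ^ l) i j}

/-- `exp(A:i)`: least positive `p` such that every entry of row `i` of `A ^ p` is positive. -/
noncomputable def expRow {n : ℕ} (A : Matrix (Fin n) (Fin n) ℝ) (i : Fin n) : ℕ :=
  sInf {p : ℕ | 0 < p ∧ ∀ j, 0 < (A ^ p) i j}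

/-- The digraph of `A` has an elementary cycle of length `k`. -/
def HasElemCycle {n : ℕ} (A : Matrix (Fin n) (Fin n) ℝ) (k : ℕ) : Prop :=
  0 < k ∧ ∃ c : ℕ → Fin n, c k = c 0 ∧
    (∀ i j, i < k → j < k → c i = c j → i = j) ∧
    ∀ i < k, A (c i) (c (i + 1)) = 1

/-- `m(U)`: the maximal length of a run of consecutive integers contained in `U`. -/
noncomputable def runMax (U : Set ℕ) : ℕ :=
  sSup {k : ℕ | ∃ a : ℕ, ∀ t < k, a + t ∈ U}

/-- The Frobenius number of a set `L`: the least `N` such that every `m ≥ N` is a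
nonnegative integer combination of elements of `L`. -/
noncomputable def frobNum (L : Set ℕ) : ℕ :=
  sInf {N : ℕ | ∀ m, N ≤ m → m ∈ AddSubmonoid.closure L}

/-- Irreducibility: for all `i j` there is a walk of some positive length from `i` to `j`. -/
def IsIrreducibleMat {n : ℕ} (A : Matrix (Fin n) (Fin n) ℝ) : Prop :=
  ∀ i j, ∃ k : ℕ, 0 < k ∧ 0 < (A ^ k) i j





lemma myNm1 {n : ℕ} (hn : 3 ≤ n) : n - 1 < n := by omega

lemma myZ {n : ℕ} (hn : 3 ≤ n) : 0 < n := by omega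

section Walks
variable {n : ℕ} (A : Matrix (Fin n) (Fin n) ℝ)

lemma myPowNonneg (h0 : ∀ i j, A i j = 0 ∨ A i j = 1) :
    ∀ (l : ℕ) (i j : Fin n), 0 ≤ (A ^ l) i j := by
  intro l
  induction l with
  | zero =>
    intro i j
    simp only [pow_zero, Matrix.one_apply]
    split <;> norm_num
  | succ l ih =>
    intro i j
    rw [pow_succ, Matrix.mul_apply]
    apply Finset.sum_nonneg
    intro v _
    have hv : 0 ≤ A v j := by rcases h0 v j with h | h <;> rw [h] <;> norm_num
    exact mul_nonneg (ih i v) hv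

lemma myPosIffWalk (h0 : ∀ i j, A i j = 0 ∨ A i j = 1) :
    ∀ (l : ℕ) (i j : Fin n), 0 < (A ^ l) i j ↔
      ∃ c : ℕ → Fin n, c 0 = i ∧ c l = j ∧ ∀ t < l, A (c t) (c (t + 1)) = 1 := by
  intro l
  induction l with
  | zero =>
    intro i j
    simp only [pow_zero, Matrix.one_apply]
    constructor
    · intro h
      by_cases hij : i = j
      · exact ⟨fun _ => i, rfl, hij, by intro t ht; omega⟩
      · simp [hij] at h
    · rintro ⟨c, hc0, hcl, _⟩
      rw [← hc0, hcl]
      simp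
  | succ l ih =>
    intro i j
    rw [pow_succ, Matrix.mul_apply]
    constructor
    · intro h
      have : ∃ v ∈ Finset.univ, 0 < (A ^ l) i v * A v j := by
        by_contra hc
        push_neg at hc
        have : ∑ v, (A ^ l) i v * A v j ≤ 0 := Finset.sum_nonpos (fun v hv => hc v hv)
        linarith
      obtain ⟨v, _, hv⟩ := this
      have hAl : 0 < (A ^ l) i v := by
        rcases lt_or_ge 0 ((A ^ l) i v) with h' | h'
        · exact h'
        · nlinarith [myPowNonneg A h0 l i v, (by rcases h0 v j with h2 | h2 <;> rw [h2] <;> norm_num : (0:ℝ) ≤ A v j)]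
      have hAvj : A v j = 1 := by
        rcases h0 v j with h2 | h2
        · rw [h2, mul_zero] at hv; exact absurd hv (lt_irrefl 0)
        · exact h2
      obtain ⟨c, hc0, hcl, hw⟩ := (ih i v).mp hAl
      refine ⟨fun t => if t ≤ l then c t else j, by simp [hc0], by simp, ?_⟩
      intro t ht
      by_cases htl : t < l
      · have h1 : t ≤ l := le_of_lt htl
        have h2 : t + 1 ≤ l := htl
        simp only [h1, h2, if_pos]
        exact hw t htl
      · have ht' : t = l := by omega
        subst ht'
        have h2 : ¬ (t + 1 ≤ t) := by omega
        simp only [le_refl, if_pos, h2, if_neg, hcl]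
        exact hAvj
    · rintro ⟨c, hc0, hcl, hw⟩
      have hv : 0 < (A ^ l) i (c l) := (ih i (c l)).mpr ⟨c, hc0, rfl, fun t ht => hw t (by omega)⟩
      have he : A (c l) j = 1 := by rw [← hcl]; exact hw l (by omega)
      calc (0:ℝ) < (A ^ l) i (c l) * A (c l) j := by rw [he]; simpa using hv
        _ ≤ ∑ v, (A ^ l) i v * A v j := by
            apply Finset.single_le_sum (f := fun v => (A ^ l) i v * A v j) ?_ (Finset.mem_univ (c l))
            intro v _
            have hv2 : 0 ≤ A v j := by rcases h0 v j with h2 | h2 <;> rw [h2] <;> norm_num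
            exact mul_nonneg (myPowNonneg A h0 l i v) hv2

end Walks
section Comp
variable {n : ℕ} (A : Matrix (Fin n) (Fin n) ℝ)

lemma myStep (hA : IsCompanion A) {i j : Fin n} (hi : (i : ℕ) + 1 < n)
    (h : A i j = 1) : (j : ℕ) = (i : ℕ) + 1 := (hA.2 i j hi).mp h

lemma myClimb (hA : IsCompanion A) (c : ℕ → Fin n) {l : ℕ}
    (hw : ∀ t < l, A (c t) (c (t + 1)) = 1) :
    ∀ t, t ≤ l → ((c 0 : ℕ) + t ≤ n - 1) → (c t : ℕ) = (c 0 : ℕ) + t := by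
  intro t
  induction t with
  | zero => simp
  | succ t ih =>
    intro htl hb
    have h0 := (c 0).isLt
    have h1 : (c t : ℕ) = (c 0 : ℕ) + t := ih (by omega) (by omega)
    have hlt : (c t : ℕ) + 1 < n := by omega
    have := myStep A hA hlt (hw t (by omega))
    omega

lemma myIntoZero (hA : IsCompanion A) {v w : Fin n} (hw0 : (w : ℕ) = 0)
    (h : A v w = 1) : (v : ℕ) = n - 1 := by
  have hv := v.isLt
  by_contra h'
  have hlt : (v : ℕ) + 1 < n := by omega
  have := myStep A hA hlt h
  omega

/-- every elementary cycle passes through vertex n-1 -/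
lemma myCycleThrough {k : ℕ} (hk : 0 < k) (c : ℕ → Fin n) (hck : c k = c 0)
    (hw : ∀ t < k, A (c t) (c (t + 1)) = 1) (hA : IsCompanion A) :
    ∃ t < k, (c t : ℕ) = n - 1 := by
  by_contra hc
  push_neg at hc
  have key : ∀ t, t ≤ k → (c t : ℕ) = (c 0 : ℕ) + t := by
    intro t
    induction t with
    | zero => simp
    | succ t ih =>
      intro htl
      have h1 : (c t : ℕ) = (c 0 : ℕ) + t := ih (by omega)
      have hne := hc t (by omega)
      have hv := (c t).isLt
      have hlt : (c t : ℕ) + 1 < n := by omega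
      have := myStep A hA hlt (hw t (by omega))
      omega
  have := key k le_rfl
  rw [hck] at this
  omega

/-- a last-row entry gives an elementary cycle of length n - j -/
lemma myEntryCycle (hn : 3 ≤ n) (hA : IsCompanion A) {j : Fin n}
    (hj : (j : ℕ) < n - 1) (he : A ⟨n - 1, myNm1 hn⟩ j = 1) :
    HasElemCycle A (n - (j : ℕ)) := by
  set m := n - (j : ℕ) with hm
  have hm2 : 2 ≤ m := by omega
  refine ⟨by omega, fun t => if h : 0 < t ∧ t < m then ⟨(j : ℕ) + t - 1, by omega⟩
    else ⟨n - 1, by omega⟩, ?_, ?_, ?_⟩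
  · simp only
    rw [dif_neg (by omega : ¬ (0 < m ∧ m < m)), dif_neg (by omega : ¬ (0 < 0 ∧ (0:ℕ) < m))]
  · intro a b ha hb hab
    have h := congrArg Fin.val hab
    simp only at h
    by_cases h1 : 0 < a ∧ a < m <;> by_cases h2 : 0 < b ∧ b < m
    · rw [dif_pos h1, dif_pos h2] at h; simp only [Fin.val_mk] at h; omega
    · rw [dif_pos h1, dif_neg h2] at h; simp only [Fin.val_mk] at h; omega
    · rw [dif_neg h1, dif_pos h2] at h; simp only [Fin.val_mk] at h; omega
    · omega
  · intro t ht
    simp only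
    by_cases ht0 : t = 0
    · subst ht0
      rw [dif_neg (by omega : ¬ (0 < 0 ∧ (0:ℕ) < m)), dif_pos (by omega : 0 < 0 + 1 ∧ 0 + 1 < m)]
      have hj' : (⟨(j : ℕ) + (0 + 1) - 1, by omega⟩ : Fin n) = j := Fin.ext (by simp)
      rw [hj']
      exact he
    · by_cases h2 : t + 1 < m
      · rw [dif_pos (⟨by omega, ht⟩ : 0 < t ∧ t < m),
          dif_pos (⟨by omega, h2⟩ : 0 < t + 1 ∧ t + 1 < m)]
        exact (hA.2 _ _ (by simp only [Fin.val_mk]; omega)).mpr (by simp only [Fin.val_mk]; omega)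
      · rw [dif_pos (⟨by omega, ht⟩ : 0 < t ∧ t < m),
          dif_neg (by omega : ¬ (0 < t + 1 ∧ t + 1 < m))]
        exact (hA.2 _ _ (by simp only [Fin.val_mk]; omega)).mpr (by simp only [Fin.val_mk]; omega)

end Comp
section Decomp
variable {n : ℕ} (A : Matrix (Fin n) (Fin n) ℝ)

/-- closed walks at vertex n-1 have lengths in the closure of cycle lengths -/
lemma myDecompose (hn : 3 ≤ n) (hA : IsCompanion A)
    (htr : A ⟨n - 1, myNm1 hn⟩ ⟨n - 1, myNm1 hn⟩ = 0) :
    ∀ l (c : ℕ → Fin n), (c 0 : ℕ) = n - 1 → (c l : ℕ) = n - 1 →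
      (∀ t < l, A (c t) (c (t + 1)) = 1) →
      l ∈ AddSubmonoid.closure {k : ℕ | HasElemCycle A k} := by
  intro l
  induction l using Nat.strong_induction_on with
  | _ l ih =>
    intro c h0 hl hw
    rcases Nat.eq_zero_or_pos l with rfl | hl0
    · exact zero_mem _
    · have hc0 : c 0 = ⟨n - 1, by omega⟩ := Fin.ext h0
      have hej : A (⟨n - 1, by omega⟩ : Fin n) (c 1) = 1 := by rw [← hc0]; exact hw 0 hl0
      have hjne : (c 1 : ℕ) ≠ n - 1 := by
        intro h
        rw [show c 1 = ⟨n - 1, by omega⟩ from Fin.ext h, htr] at hej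
        norm_num at hej
      have hjlt : (c 1 : ℕ) < n - 1 := by have := (c 1).isLt; omega
      set j : ℕ := (c 1 : ℕ) with hjdef
      set m : ℕ := n - j with hmdef
      have hm2 : 2 ≤ m := by omega
      -- the shifted walk
      have hw' : ∀ t < l - 1, A ((fun s => c (1 + s)) t) ((fun s => c (1 + s)) (t + 1)) = 1 := by
        intro t ht
        simp only
        have : 1 + (t + 1) = (1 + t) + 1 := by omega
        rw [this]
        exact hw (1 + t) (by omega)
      have hclimb := myClimb A hA (fun s => c (1 + s)) hw'
      -- l ≥ m
      have hc10 : ((fun s => c (1 + s)) 0 : ℕ) = j := by simp only [Nat.add_zero]; exact hjdef.symm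
      have hlm : m ≤ l := by
        by_contra hcon
        push_neg at hcon
        have h2 := hclimb (l - 1) le_rfl (by rw [hc10]; omega)
        rw [hc10] at h2
        have h3 : (c (1 + (l - 1)) : ℕ) = j + (l - 1) := h2
        rw [show 1 + (l - 1) = l by omega] at h3
        omega
      -- c m = n-1
      have hcm : (c m : ℕ) = n - 1 := by
        have h2 := hclimb (m - 1) (by omega) (by rw [hc10]; omega)
        rw [hc10] at h2
        have h3 : (c (1 + (m - 1)) : ℕ) = j + (m - 1) := h2
        rw [show 1 + (m - 1) = m by omega] at h3
        omega
      -- m is an elementary cycle length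
      have hmL : HasElemCycle A m := myEntryCycle A hn hA hjlt hej
      -- recurse on the rest
      have hrest : (l - m) ∈ AddSubmonoid.closure {k : ℕ | HasElemCycle A k} := by
        apply ih (l - m) (by omega) (fun s => c (m + s))
        · show (c (m + 0) : ℕ) = n - 1
          rw [Nat.add_zero]; exact hcm
        · show (c (m + (l - m)) : ℕ) = n - 1
          rw [show m + (l - m) = l by omega]; exact hl
        · intro t ht
          show A (c (m + t)) (c (m + (t + 1))) = 1
          rw [show m + (t + 1) = (m + t) + 1 by omega]
          exact hw (m + t) (by omega)
      have : l = m + (l - m) := by omega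
      rw [this]
      exact add_mem (AddSubmonoid.subset_closure hmL) hrest

/-- walk concatenation -/
lemma myConcat (c1 c2 : ℕ → Fin n) (s1 s2 : ℕ) (hmid : c2 0 = c1 s1)
    (hw1 : ∀ t < s1, A (c1 t) (c1 (t + 1)) = 1)
    (hw2 : ∀ t < s2, A (c2 t) (c2 (t + 1)) = 1) :
    ∃ c : ℕ → Fin n, c 0 = c1 0 ∧ c (s1 + s2) = c2 s2 ∧
      ∀ t < s1 + s2, A (c t) (c (t + 1)) = 1 := by
  refine ⟨fun t => if t < s1 then c1 t else c2 (t - s1), ?_, ?_, ?_⟩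
  · simp only
    by_cases h : 0 < s1
    · rw [if_pos h]
    · rw [if_neg h]
      have : s1 = 0 := by omega
      rw [this] at hmid ⊢
      simpa using hmid
  · simp only
    rw [if_neg (by omega)]
    congr 1
    omega
  · intro t ht
    simp only
    by_cases h1 : t + 1 < s1
    · rw [if_pos (by omega), if_pos h1]
      exact hw1 t (by omega)
    · by_cases h2 : t < s1
      · have hts : t + 1 = s1 := by omega
        rw [if_pos h2, if_neg (by omega), show t + 1 - s1 = 0 by omega, hmid, ← hts]
        exact hw1 t (by omega)
      · rw [if_neg h2, if_neg (by omega), show t + 1 - s1 = (t - s1) + 1 by omega]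
        exact hw2 (t - s1) (by omega)

/-- the long cycle as an infinite walk -/
lemma myCycWalk (hn : 3 ≤ n) (hA : IsCompanion A) (h1 : A ⟨n - 1, myNm1 hn⟩ ⟨0, myZ hn⟩ = 1) :
    ∀ t : ℕ, A (⟨t % n, Nat.mod_lt _ (myZ hn)⟩ : Fin n) ⟨(t + 1) % n, Nat.mod_lt _ (myZ hn)⟩ = 1 := by
  intro t
  by_cases h : t % n + 1 < n
  · have he : (t + 1) % n = t % n + 1 := by
      rw [Nat.add_mod, Nat.mod_eq_of_lt (show 1 < n by omega), Nat.mod_eq_of_lt h]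
    exact (hA.2 _ _ (by simp only [Fin.val_mk]; omega)).mpr (by simp only [Fin.val_mk]; omega)
  · have hm : t % n = n - 1 := by have := Nat.mod_lt t (show 0 < n by omega); omega
    have he : (t + 1) % n = 0 := by
      rw [Nat.add_mod, Nat.mod_eq_of_lt (show 1 < n by omega), hm,
        show n - 1 + 1 = n by omega, Nat.mod_self]
    have : (⟨t % n, Nat.mod_lt _ (by omega)⟩ : Fin n) = ⟨n - 1, by omega⟩ := Fin.ext hm
    rw [this]
    have : (⟨(t + 1) % n, Nat.mod_lt _ (by omega)⟩ : Fin n) = ⟨0, by omega⟩ := Fin.ext he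
    rw [this]
    exact h1

end Decomp
section Compose
variable {n : ℕ} (A : Matrix (Fin n) (Fin n) ℝ)

lemma myCompose (hn : 3 ≤ n) (hA : IsCompanion A) :
    ∀ s ∈ AddSubmonoid.closure {k : ℕ | HasElemCycle A k},
      ∃ c : ℕ → Fin n, (c 0 : ℕ) = n - 1 ∧ (c s : ℕ) = n - 1 ∧
        ∀ t < s, A (c t) (c (t + 1)) = 1 := by
  intro s hs
  refine AddSubmonoid.closure_induction ?_ ?_ ?_ hs
  · rintro k ⟨hk, c, hck, hinj, hw⟩
    obtain ⟨t, htk, hte⟩ := myCycleThrough A hk c hck hw hA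
    refine ⟨fun i => c ((t + i) % k), ?_, ?_, ?_⟩
    · show (c ((t + 0) % k) : ℕ) = n - 1
      rw [Nat.add_zero, Nat.mod_eq_of_lt htk]
      exact hte
    · show (c ((t + k) % k) : ℕ) = n - 1
      rw [Nat.add_mod_right, Nat.mod_eq_of_lt htk]
      exact hte
    · intro i hik
      show A (c ((t + i) % k)) (c ((t + (i + 1)) % k)) = 1
      set m := (t + i) % k with hmdef
      have hm : m < k := Nat.mod_lt _ hk
      have hstep : (t + (i + 1)) % k = (m + 1) % k := by
        rw [show t + (i + 1) = (t + i) + 1 by omega, hmdef, Nat.mod_add_mod]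
      rw [hstep]
      by_cases h2 : m + 1 < k
      · rw [Nat.mod_eq_of_lt h2]
        exact hw m hm
      · have hmk : m + 1 = k := by omega
        rw [show (m + 1) % k = 0 by rw [hmk, Nat.mod_self], ← hck, ← hmk]
        exact hw m hm
  · exact ⟨fun _ => ⟨n - 1, by omega⟩, by simp, by simp, by intro t ht; omega⟩
  · rintro x y hx hy ⟨c1, hc10, hc1x, hw1⟩ ⟨c2, hc20, hc2y, hw2⟩
    obtain ⟨c, h0, hxy, hw⟩ := myConcat A c1 c2 x y (Fin.ext (by rw [hc20, hc1x])) hw1 hw2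
    exact ⟨c, by rw [h0]; exact hc10, by rw [hxy]; exact hc2y, hw⟩

/-- for every length s there is a walk ending at n-1 -/
lemma myToE (hn : 3 ≤ n) (hA : IsCompanion A)
    (h1 : A ⟨n - 1, myNm1 hn⟩ ⟨0, myZ hn⟩ = 1) (s : ℕ) :
    ∃ c : ℕ → Fin n, (c s : ℕ) = n - 1 ∧ ∀ t < s, A (c t) (c (t + 1)) = 1 := by
  set a := n - 1 + (n - s % n) with ha
  refine ⟨fun t => ⟨(a + t) % n, Nat.mod_lt _ (by omega)⟩, ?_, ?_⟩
  · simp only [Fin.val_mk]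
    have hr : s % n < n := Nat.mod_lt _ (by omega)
    have hd : n * (s / n) + s % n = s := Nat.div_add_mod s n
    have h2 : a + s = n - 1 + n * (s / n + 1) := by
      rw [Nat.mul_succ]
      omega
    rw [h2, Nat.add_mul_mod_self_left, Nat.mod_eq_of_lt (by omega)]
  · intro t ht
    show A (⟨(a + t) % n, Nat.mod_lt _ (by omega)⟩ : Fin n)
      ⟨(a + (t + 1)) % n, Nat.mod_lt _ (by omega)⟩ = 1
    rw [show a + (t + 1) = (a + t) + 1 by omega]
    exact myCycWalk A hn hA h1 (a + t)

end Compose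
section Main
variable {n : ℕ} (A : Matrix (Fin n) (Fin n) ℝ)

lemma myPosZZ (hn : 3 ≤ n) (hA : IsCompanion A)
    (h1 : A ⟨n - 1, myNm1 hn⟩ ⟨0, myZ hn⟩ = 1)
    (htr : A ⟨n - 1, myNm1 hn⟩ ⟨n - 1, myNm1 hn⟩ = 0)
    {l : ℕ} (hl : 1 ≤ l) :
    0 < (A ^ l) (⟨0, myZ hn⟩ : Fin n) ⟨0, myZ hn⟩ ↔
      n ≤ l ∧ (l - n) ∈ AddSubmonoid.closure {k : ℕ | HasElemCycle A k} := by
  rw [myPosIffWalk A hA.1 l]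
  constructor
  · rintro ⟨c, hc0, hcl, hw⟩
    have hc0v : (c 0 : ℕ) = 0 := by rw [hc0]
    have hclv : (c l : ℕ) = 0 := by rw [hcl]
    have hclimb := myClimb A hA c hw
    have hln : n ≤ l := by
      by_contra hcon
      push_neg at hcon
      have := hclimb l le_rfl (by omega)
      omega
    refine ⟨hln, ?_⟩
    have hlast : (c (l - 1) : ℕ) = n - 1 := by
      have h2 := hw (l - 1) (by omega)
      rw [show l - 1 + 1 = l by omega] at h2
      exact myIntoZero A hA hclv h2
    have hmid : (c (n - 1) : ℕ) = n - 1 := by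
      have := hclimb (n - 1) (by omega) (by omega)
      omega
    have := myDecompose A hn hA htr (l - n) (fun t => c (n - 1 + t)) ?_ ?_ ?_
    · exact this
    · show (c (n - 1 + 0) : ℕ) = n - 1
      rw [Nat.add_zero]; exact hmid
    · show (c (n - 1 + (l - n)) : ℕ) = n - 1
      rw [show n - 1 + (l - n) = l - 1 by omega]; exact hlast
    · intro t ht
      show A (c (n - 1 + t)) (c (n - 1 + (t + 1))) = 1
      rw [show n - 1 + (t + 1) = (n - 1 + t) + 1 by omega]
      exact hw (n - 1 + t) (by omega)
  · rintro ⟨hln, hmem⟩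
    obtain ⟨c2, hc20, hc2s, hw2⟩ := myCompose A hn hA (l - n) hmem
    have hw1 : ∀ t < n - 1, A ((fun t => (⟨min t (n - 1), by omega⟩ : Fin n)) t)
        ((fun t => (⟨min t (n - 1), by omega⟩ : Fin n)) (t + 1)) = 1 := by
      intro t ht
      show A (⟨min t (n - 1), by omega⟩ : Fin n) ⟨min (t + 1) (n - 1), by omega⟩ = 1
      apply (hA.2 _ _ (by simp only [Fin.val_mk]; omega)).mpr
      simp only [Fin.val_mk]
      omega
    obtain ⟨c3, h30, h3e, hw3⟩ := myConcat A _ c2 (n - 1) (l - n)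
      (Fin.ext (by simp only [Fin.val_mk, Nat.min_self, hc20])) hw1 hw2
    have hw5 : ∀ t < 1, A ((fun s => if s = 0 then (⟨n - 1, by omega⟩ : Fin n)
        else ⟨0, by omega⟩) t) ((fun s => if s = 0 then (⟨n - 1, by omega⟩ : Fin n)
        else ⟨0, by omega⟩) (t + 1)) = 1 := by
      intro t ht
      have ht0 : t = 0 := by omega
      subst ht0
      show A (⟨n - 1, by omega⟩ : Fin n) (⟨0, by omega⟩ : Fin n) = 1
      exact h1
    obtain ⟨c4, h40, h4l, hw4⟩ := myConcat A c3
      (fun s => if s = 0 then (⟨n - 1, by omega⟩ : Fin n) else ⟨0, by omega⟩)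
      (n - 1 + (l - n)) 1
      (Fin.ext (by
        show ((⟨n - 1, by omega⟩ : Fin n) : ℕ) = (c3 (n - 1 + (l - n)) : ℕ)
        simp only [h3e, hc2s, Fin.val_mk])) hw3 hw5
    refine ⟨c4, ?_, ?_, ?_⟩
    · rw [h40, h30]
      exact Fin.ext (by simp)
    · rw [show l = (n - 1 + (l - n)) + 1 by omega, h4l]
      norm_num
    · intro t ht
      exact hw4 t (by omega)

lemma myFrobBound (hn : 3 ≤ n) (hA : IsCompanion A) (hP : _root_.IsPrimitive A)
    (h1 : A ⟨n - 1, myNm1 hn⟩ ⟨0, myZ hn⟩ = 1)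
    (htr : A ⟨n - 1, myNm1 hn⟩ ⟨n - 1, myNm1 hn⟩ = 0) :
    ∃ N : ℕ, ∀ m', N ≤ m' → m' ∈ AddSubmonoid.closure {k : ℕ | HasElemCycle A k} := by
  obtain ⟨m, hm0, hpos⟩ := hP
  refine ⟨m, fun t ht => ?_⟩
  obtain ⟨c2, hc2e, hw2⟩ := myToE A hn hA h1 (t - m)
  obtain ⟨c1, h10, h1m, hw1⟩ := (myPosIffWalk A hA.1 m ⟨n - 1, by omega⟩ (c2 0)).mp (hpos _ _)
  obtain ⟨c, h0, hl, hw⟩ := myConcat A c1 c2 m (t - m) h1m.symm hw1 hw2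
  have hd := myDecompose A hn hA htr (m + (t - m)) c
    (by rw [h0, h10]) (by rw [hl]; exact hc2e) hw
  rwa [show m + (t - m) = t by omega] at hd

end Main

theorem stmt11 {n : ℕ} (hn : 3 ≤ n) (A : Matrix (Fin n) (Fin n) ℝ)
    (hA : IsCompanion A) (hP : _root_.IsPrimitive A)
    (h1 : A ⟨n - 1, by omega⟩ ⟨0, by omega⟩ = 1)
    (htr : A ⟨n - 1, by omega⟩ ⟨n - 1, by omega⟩ = 0) :
    expIJ A ⟨0, by omega⟩ ⟨0, by omega⟩ = n + frobNum {k : ℕ | HasElemCycle A k} := by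
  set L : Set ℕ := {k | HasElemCycle A k} with hLdef
  set S2 : Set ℕ := {N | ∀ m, N ≤ m → m ∈ AddSubmonoid.closure L} with hS2def
  have hS2ne : S2.Nonempty := myFrobBound A hn hA hP h1 htr
  have hN0mem : sInf S2 ∈ S2 := Nat.sInf_mem hS2ne
  set N0 : ℕ := sInf S2 with hN0def
  have hfr : frobNum L = N0 := rfl
  set T : Set ℕ := {k | 0 < k ∧ ∀ l, k ≤ l → 0 < (A ^ l) (⟨0, by omega⟩ : Fin n) ⟨0, by omega⟩}
    with hTdef
  have hT1 : n + N0 ∈ T := by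
    refine ⟨by omega, fun l hl => ?_⟩
    exact (myPosZZ A hn hA h1 htr (by omega)).mpr ⟨by omega, hN0mem (l - n) (by omega)⟩
  have hTne : T.Nonempty := ⟨n + N0, hT1⟩
  obtain ⟨hk0, hk⟩ := Nat.sInf_mem hTne
  have hk0n : n ≤ sInf T := by
    by_contra h
    push_neg at h
    have h2 := hk (n - 1) (by omega)
    have h3 := (myPosZZ A hn hA h1 htr (by omega : 1 ≤ n - 1)).mp h2
    omega
  have hup : (sInf T - n) ∈ S2 := by
    intro m' hm'
    have h2 := hk (m' + n) (by omega)
    have h3 := (myPosZZ A hn hA h1 htr (by omega)).mp h2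
    rw [Nat.add_sub_cancel] at h3
    exact h3.2
  have hle1 : N0 ≤ sInf T - n := Nat.sInf_le hup
  have hle2 : sInf T ≤ n + N0 := Nat.sInf_le hT1
  have hEq : expIJ A (⟨0, by omega⟩ : Fin n) ⟨0, by omega⟩ = sInf T := rfl
  rw [hEq, hfr]
  omega
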